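/- Let Y be an integrable real random variable and define, for q ∈ ℝ with E[max(q − Y, 0)] + E[max(Y − q, 0)] > 0, the level τ̃(q) = E[max(q − Y, 0)] / (E[max(q − Y, 0)] + E[max(Y − q, 0)]). Then: (i) q satisfies the expectile first-order condition at level τ̃(q), i.e., τ̃(q)·E[max(Y − q, 0)] = (1−τ̃(q))·E[max(q − Y, 0)], so q is a τ̃(q)-expectile of Y; and (ii) the map q ↦ τ̃(q) is strictly increasing wherever it is defined in the interior of the support: if q_1 < q_2 with P(Y ≤ q_1) > 0 and P(Y ≥ q_2) > 0, then τ̃(q_1) < τ̃(q_2). Consequently there is a one-to-one mapping between quantiles and expectiles of Y, under which the quantile q_τ is the τ̃(q_τ)-expectile. -/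

import Mathlib

open MeasureTheory

/-- The expectile level associated with a point `q`:
`τ̃(q) = E[max(q − Y, 0)] / (E[max(q − Y, 0)] + E[max(Y − q, 0)])`. -/
noncomputable def tauLevel {Ω : Type*} [MeasurableSpace Ω] (μ : Measure Ω)
    (Y : Ω → ℝ) (q : ℝ) : ℝ :=
  (∫ ω, max (q - Y ω) 0 ∂μ) /
    ((∫ ω, max (q - Y ω) 0 ∂μ) + ∫ ω, max (Y ω - q) 0 ∂μ)

/-- (i) Any `q` with positive total deviation mass satisfies the expectile first-order
condition at level `τ̃(q)`, so `q` is a `τ̃(q)`-expectile of `Y`; and (ii) `q ↦ τ̃(q)` is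
strictly increasing in the interior of the support. Consequently there is a one-to-one
mapping between quantiles and expectiles, under which the quantile `q_τ` is the
`τ̃(q_τ)`-expectile. -/
theorem quantile_expectile_one_to_one
    {Ω : Type*} [MeasurableSpace Ω] (μ : Measure Ω) [IsProbabilityMeasure μ]
    (Y : Ω → ℝ) (hY : Integrable Y μ) :
    (∀ q : ℝ, 0 < (∫ ω, max (q - Y ω) 0 ∂μ) + ∫ ω, max (Y ω - q) 0 ∂μ →
      tauLevel μ Y q * ∫ ω, max (Y ω - q) 0 ∂μ =
        (1 - tauLevel μ Y q) * ∫ ω, max (q - Y ω) 0 ∂μ) ∧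
    (∀ q₁ q₂ : ℝ, q₁ < q₂ → 0 < μ {ω | Y ω ≤ q₁} → 0 < μ {ω | q₂ ≤ Y ω} →
      tauLevel μ Y q₁ < tauLevel μ Y q₂) := by
  have hA : ∀ q : ℝ, Integrable (fun ω => max (q - Y ω) 0) μ := fun q =>
    ((integrable_const q).sub hY).pos_part
  have hB : ∀ q : ℝ, Integrable (fun ω => max (Y ω - q) 0) μ := fun q =>
    (hY.sub (integrable_const q)).pos_part
  constructor
  · intro q hq
    unfold tauLevel
    have hne : (∫ ω, max (q - Y ω) 0 ∂μ) + ∫ ω, max (Y ω - q) 0 ∂μ ≠ 0 := ne_of_gt hq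
    field_simp
    ring
  · intro q₁ q₂ hq h1 h2
    set Y' := (hY.1).mk Y with hY'def
    have hY'sm : StronglyMeasurable Y' := (hY.1).stronglyMeasurable_mk
    have hae : ∀ᵐ ω ∂μ, Y ω = Y' ω := (hY.1).ae_eq_mk
    set N := toMeasurable μ {ω | ¬ Y ω = Y' ω} with hNdef
    have hNmeas : MeasurableSet N := measurableSet_toMeasurable _ _
    have hNnull : μ N = 0 := by
      rw [hNdef, measure_toMeasurable]
      exact ae_iff.mp hae
    have hsubN : {ω | ¬ Y ω = Y' ω} ⊆ N := subset_toMeasurable _ _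
    -- the key lower bound lemma
    have key : ∀ (g : Ω → ℝ) (s : Set Ω), Integrable g μ → MeasurableSet s →
        (∀ ω, 0 ≤ g ω) → (∀ ω ∈ s, q₂ - q₁ ≤ g ω) →
        (q₂ - q₁) * (μ s).toReal ≤ ∫ ω, g ω ∂μ := by
      intro g s hg hs hg0 hgs
      calc (q₂ - q₁) * (μ s).toReal ≤ ∫ ω in s, g ω ∂μ :=
            by
              have h := setIntegral_ge_of_const_le hs (measure_ne_top μ s) hgs hg.integrableOn
              rw [smul_eq_mul, mul_comm] at h
              exact h
        _ ≤ ∫ ω, g ω ∂μ :=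
            setIntegral_le_integral hg (Filter.Eventually.of_forall hg0)
    set L₁ := ∫ ω, max (q₁ - Y ω) 0 ∂μ
    set L₂ := ∫ ω, max (q₂ - Y ω) 0 ∂μ
    set U₁ := ∫ ω, max (Y ω - q₁) 0 ∂μ
    set U₂ := ∫ ω, max (Y ω - q₂) 0 ∂μ
    have hL₁0 : 0 ≤ L₁ := integral_nonneg fun ω => le_max_right _ _
    have hU₂0 : 0 ≤ U₂ := integral_nonneg fun ω => le_max_right _ _
    -- L strictly increases
    have hsmeas : MeasurableSet ({ω | Y' ω ≤ q₁} \ N) :=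
      (hY'sm.measurable measurableSet_Iic).diff hNmeas
    have hspos : 0 < μ ({ω | Y' ω ≤ q₁} \ N) := by
      refine lt_of_lt_of_le h1 ?_
      calc μ {ω | Y ω ≤ q₁} ≤ μ (({ω | Y' ω ≤ q₁} \ N) ∪ N) := by
            apply measure_mono
            intro ω hω
            by_cases hωN : ω ∈ N
            · exact Or.inr hωN
            · exact Or.inl ⟨by
                have : Y ω = Y' ω := by
                  by_contra hc; exact hωN (hsubN hc)
                simpa [← this] using hω, hωN⟩
        _ ≤ μ ({ω | Y' ω ≤ q₁} \ N) + μ N := measure_union_le _ _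
        _ = μ ({ω | Y' ω ≤ q₁} \ N) := by rw [hNnull, add_zero]
    have hLlt : L₁ < L₂ := by
      have hdiff : L₂ - L₁ = ∫ ω, (max (q₂ - Y ω) 0 - max (q₁ - Y ω) 0) ∂μ :=
        (integral_sub (hA q₂) (hA q₁)).symm
      have hkey := key (fun ω => max (q₂ - Y ω) 0 - max (q₁ - Y ω) 0)
        ({ω | Y' ω ≤ q₁} \ N) ((hA q₂).sub (hA q₁)) hsmeas
        (fun ω => by
          simp only [sub_nonneg]
          exact max_le_max (by linarith [hq.le]) le_rfl)
        (fun ω hω => by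
          have hYeq : Y ω = Y' ω := by
            by_contra hc; exact hω.2 (hsubN hc)
          have hωq : Y ω ≤ q₁ := hYeq ▸ hω.1
          show q₂ - q₁ ≤ max (q₂ - Y ω) 0 - max (q₁ - Y ω) 0
          rw [max_eq_left (by linarith), max_eq_left (by linarith)]
          linarith)
      have hpos : 0 < (q₂ - q₁) * (μ ({ω | Y' ω ≤ q₁} \ N)).toReal :=
        mul_pos (by linarith) (ENNReal.toReal_pos (ne_of_gt hspos) (measure_ne_top μ _))
      linarith [hdiff ▸ hkey]
    -- U strictly decreases
    have htmeas : MeasurableSet ({ω | q₂ ≤ Y' ω} \ N) :=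
      (hY'sm.measurable measurableSet_Ici).diff hNmeas
    have htpos : 0 < μ ({ω | q₂ ≤ Y' ω} \ N) := by
      refine lt_of_lt_of_le h2 ?_
      calc μ {ω | q₂ ≤ Y ω} ≤ μ (({ω | q₂ ≤ Y' ω} \ N) ∪ N) := by
            apply measure_mono
            intro ω hω
            by_cases hωN : ω ∈ N
            · exact Or.inr hωN
            · exact Or.inl ⟨by
                have : Y ω = Y' ω := by
                  by_contra hc; exact hωN (hsubN hc)
                simpa [← this] using hω, hωN⟩
        _ ≤ μ ({ω | q₂ ≤ Y' ω} \ N) + μ N := measure_union_le _ _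
        _ = μ ({ω | q₂ ≤ Y' ω} \ N) := by rw [hNnull, add_zero]
    have hUlt : U₂ < U₁ := by
      have hdiff : U₁ - U₂ = ∫ ω, (max (Y ω - q₁) 0 - max (Y ω - q₂) 0) ∂μ :=
        (integral_sub (hB q₁) (hB q₂)).symm
      have hkey := key (fun ω => max (Y ω - q₁) 0 - max (Y ω - q₂) 0)
        ({ω | q₂ ≤ Y' ω} \ N) ((hB q₁).sub (hB q₂)) htmeas
        (fun ω => by
          simp only [sub_nonneg]
          exact max_le_max (by linarith [hq.le]) le_rfl)
        (fun ω hω => by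
          have hYeq : Y ω = Y' ω := by
            by_contra hc; exact hω.2 (hsubN hc)
          have hωq : q₂ ≤ Y ω := hYeq ▸ hω.1
          show q₂ - q₁ ≤ max (Y ω - q₁) 0 - max (Y ω - q₂) 0
          rw [max_eq_left (by linarith), max_eq_left (by linarith)]
          linarith)
      have hpos : 0 < (q₂ - q₁) * (μ ({ω | q₂ ≤ Y' ω} \ N)).toReal :=
        mul_pos (by linarith) (ENNReal.toReal_pos (ne_of_gt htpos) (measure_ne_top μ _))
      linarith [hdiff ▸ hkey]
    have hL₂pos : 0 < L₂ := lt_of_le_of_lt hL₁0 hLlt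
    have hU₁pos : 0 < U₁ := lt_of_le_of_lt hU₂0 hUlt
    unfold tauLevel
    rw [div_lt_div_iff₀ (by linarith) (by linarith)]
    nlinarith [mul_lt_mul_of_pos_left hUlt hL₂pos, mul_le_mul_of_nonneg_right hLlt.le hU₂0]
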